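/- Every linear classification problem (ℋ, μ) has a primal hard core: a minimal (up to μ-null sets) element 𝒫 of 𝒮_𝒫(ℋ,μ), i.e., 𝒫 ∈ 𝒮_𝒫(ℋ,μ) and for every C ∈ 𝒮_𝒫(ℋ,μ), μ(𝒫 \ C) = 0. -/

import Mathlib

open MeasureTheory Filter ENNReal

/-- `C` is in the primal collection `𝒮_𝒫(ℋ,μ)`. -/
def PrimalSet {X : Type*} [MeasurableSpace X]
    (μ : Measure (X × ℝ)) (n : ℕ) (h : Fin n → X → ℝ) (C : Set (X × ℝ)) : Prop :=
  ∃ lam : ℕ → Fin n → ℝ,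
    (∀ i, ∀ z ∈ C, z.2 * (∑ j, lam i j * h j z.1) = 0) ∧
    (∀ᵐ z ∂μ, z ∈ Cᶜ →
      Monotone (fun i => z.2 * (∑ j, lam i j * h j z.1)) ∧
      Tendsto (fun i => z.2 * (∑ j, lam i j * h j z.1)) atTop atTop)

section Aux

variable {X : Type*} [MeasurableSpace X]

private lemma g_sub {n : ℕ} (h : Fin n → X → ℝ) (a b : Fin n → ℝ) (z : X × ℝ) :
    z.2 * (∑ j, (a j - b j) * h j z.1)
      = z.2 * (∑ j, a j * h j z.1) - z.2 * (∑ j, b j * h j z.1) := by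
  rw [← mul_sub, ← Finset.sum_sub_distrib]
  congr 1
  exact Finset.sum_congr rfl fun j _ => by ring

private lemma g_sum {n : ℕ} (h : Fin n → X → ℝ) (s : Finset ℕ) (a : ℕ → Fin n → ℝ)
    (z : X × ℝ) :
    z.2 * (∑ j, (∑ k ∈ s, a k j) * h j z.1)
      = ∑ k ∈ s, z.2 * (∑ j, a k j * h j z.1) := by
  have : (∑ j, (∑ k ∈ s, a k j) * h j z.1) = ∑ k ∈ s, ∑ j, a k j * h j z.1 := by
    rw [← Finset.sum_comm]
    exact Finset.sum_congr rfl fun j _ => Finset.sum_mul _ _ _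
  rw [this, Finset.mul_sum]

lemma primal_univ (μ : Measure (X × ℝ)) (n : ℕ) (h : Fin n → X → ℝ) :
    PrimalSet μ n h Set.univ := by
  refine ⟨fun _ _ => 0, fun i z _ => by simp, ?_⟩
  filter_upwards with z hz
  simp at hz

lemma primal_iInter (μ : Measure (X × ℝ)) (n : ℕ) (h : Fin n → X → ℝ)
    (C : ℕ → Set (X × ℝ)) (hC : ∀ k, PrimalSet μ n h (C k)) :
    PrimalSet μ n h (⋂ k, C k) := by
  choose lam hzero hae using hC
  refine ⟨fun i j => ∑ k ∈ Finset.range (i + 1), (lam k i j - lam k 0 j), ?_, ?_⟩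
  · intro i z hz
    rw [g_sum]
    refine Finset.sum_eq_zero fun k _ => ?_
    rw [g_sub, hzero k i z (Set.mem_iInter.mp hz k), hzero k 0 z (Set.mem_iInter.mp hz k),
      sub_zero]
  · have hall : ∀ᵐ z ∂μ, ∀ k, z ∈ (C k)ᶜ →
        Monotone (fun i => z.2 * (∑ j, lam k i j * h j z.1)) ∧
        Tendsto (fun i => z.2 * (∑ j, lam k i j * h j z.1)) atTop atTop :=
      ae_all_iff.mpr hae
    filter_upwards [hall] with z hz hzc
    set a : ℕ → ℕ → ℝ := fun k i =>
      z.2 * (∑ j, lam k i j * h j z.1) - z.2 * (∑ j, lam k 0 j * h j z.1) with ha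
    have hmono : ∀ k, Monotone (a k) := by
      intro k
      by_cases hk : z ∈ C k
      · intro i i' _
        simp [ha, hzero k i z hk, hzero k i' z hk]
      · intro i i' hii
        exact sub_le_sub_right ((hz k hk).1 hii) _
    have hnonneg : ∀ k i, 0 ≤ a k i := by
      intro k i
      have := hmono k (Nat.zero_le i)
      simpa [ha] using this
    have key : ∀ i, z.2 * (∑ j,
        (∑ k ∈ Finset.range (i + 1), (lam k i j - lam k 0 j)) * h j z.1)
        = ∑ k ∈ Finset.range (i + 1), a k i := by
      intro i
      rw [g_sum]
      exact Finset.sum_congr rfl fun k _ => g_sub h _ _ z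
    constructor
    · intro i i' hii
      simp only [key]
      calc ∑ k ∈ Finset.range (i + 1), a k i
          ≤ ∑ k ∈ Finset.range (i + 1), a k i' :=
            Finset.sum_le_sum fun k _ => hmono k hii
        _ ≤ ∑ k ∈ Finset.range (i' + 1), a k i' :=
            Finset.sum_le_sum_of_subset_of_nonneg
              (Finset.range_subset_range.mpr (by omega)) (fun k _ _ => hnonneg k i')
    · obtain ⟨k0, hk0⟩ : ∃ k, z ∉ C k := by
        simpa [Set.mem_iInter] using hzc
      have h1 : Tendsto (a k0) atTop atTop := by
        have := tendsto_atTop_add_const_right atTop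
          (-(z.2 * (∑ j, lam k0 0 j * h j z.1))) (hz k0 hk0).2
        simpa [ha, sub_eq_add_neg] using this
      refine tendsto_atTop_mono' atTop ?_ h1
      filter_upwards [eventually_ge_atTop k0] with i hi
      rw [key]
      exact Finset.single_le_sum (f := fun k => a k i) (fun k _ => hnonneg k i)
        (Finset.mem_range.mpr (by omega))

lemma primal_inter (μ : Measure (X × ℝ)) (n : ℕ) (h : Fin n → X → ℝ)
    {P C : Set (X × ℝ)} (hP : PrimalSet μ n h P) (hC : PrimalSet μ n h C) :
    PrimalSet μ n h (P ∩ C) := by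
  have h2 := primal_iInter μ n h (fun k => if k = 0 then P else C)
    (fun k => by split_ifs <;> assumption)
  have heq : (⋂ k, if k = 0 then P else C) = P ∩ C := by
    ext z
    simp only [Set.mem_iInter, Set.mem_inter_iff]
    constructor
    · intro hk
      refine ⟨by simpa using hk 0, by simpa using hk 1⟩
    · rintro ⟨h1, h2⟩ k
      split_ifs <;> assumption
  rwa [heq] at h2

end Aux

theorem primal_hard_core_exists
    {X : Type*} [MeasurableSpace X]
    (μ : Measure (X × ℝ)) [IsProbabilityMeasure μ]
    (n : ℕ) (h : Fin n → X → ℝ)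
    (hmeas : ∀ i, Measurable (h i)) (hbd : ∀ i x, |h i x| ≤ 1) :
    ∃ P : Set (X × ℝ), MeasurableSet P ∧ PrimalSet μ n h P ∧
      ∀ C : Set (X × ℝ), MeasurableSet C → PrimalSet μ n h C → μ (P \ C) = 0 := by
  set S : Set (Set (X × ℝ)) := {C | MeasurableSet C ∧ PrimalSet μ n h C} with hS
  have hne : Set.univ ∈ S := ⟨MeasurableSet.univ, primal_univ μ n h⟩
  set s : ℝ≥0∞ := ⨅ C : S, μ C with hs
  have hsne : s ≠ ⊤ := by
    have : s ≤ μ Set.univ := iInf_le (fun C : S => μ C) ⟨Set.univ, hne⟩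
    exact ne_top_of_le_ne_top (measure_ne_top μ _) this
  -- choose a minimizing sequence
  have hex : ∀ k : ℕ, ∃ C : S, μ C < s + ((k : ℝ≥0∞) + 1)⁻¹ := by
    intro k
    have hlt : s < s + ((k : ℝ≥0∞) + 1)⁻¹ :=
      ENNReal.lt_add_right hsne (ENNReal.inv_ne_zero.mpr (by simp))
    obtain ⟨C, hC⟩ := iInf_lt_iff.mp hlt
    exact ⟨C, hC⟩
  choose Cs hCs using hex
  set P : Set (X × ℝ) := ⋂ k, (Cs k : Set (X × ℝ)) with hP
  have hPmeas : MeasurableSet P := MeasurableSet.iInter fun k => ((Cs k).2).1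
  have hPprimal : PrimalSet μ n h P :=
    primal_iInter μ n h _ fun k => ((Cs k).2).2
  have hPS : P ∈ S := ⟨hPmeas, hPprimal⟩
  have hsleP : s ≤ μ P := iInf_le (fun C : S => μ C) ⟨P, hPS⟩
  have hPles : μ P ≤ s := by
    refine ENNReal.le_of_forall_pos_le_add fun ε hε _ => ?_
    obtain ⟨k, hk⟩ := ENNReal.exists_inv_nat_lt
      (show (ε : ℝ≥0∞) ≠ 0 by exact_mod_cast hε.ne')
    have h1 : μ P ≤ μ (Cs k) := measure_mono (Set.iInter_subset _ k)
    have h2 : ((k : ℝ≥0∞) + 1)⁻¹ ≤ (k : ℝ≥0∞)⁻¹ :=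
      ENNReal.inv_le_inv.mpr (le_add_of_nonneg_right zero_le_one)
    calc μ P ≤ μ (Cs k) := h1
      _ ≤ s + ((k : ℝ≥0∞) + 1)⁻¹ := (hCs k).le
      _ ≤ s + ε := add_le_add_right (h2.trans hk.le) s
  refine ⟨P, hPmeas, hPprimal, fun C hCmeas hCprimal => ?_⟩
  have hPCS : P ∩ C ∈ S := ⟨hPmeas.inter hCmeas, primal_inter μ n h hPprimal hCprimal⟩
  have hslePC : s ≤ μ (P ∩ C) := iInf_le (fun C : S => μ C) ⟨P ∩ C, hPCS⟩
  have hsplit : μ (P ∩ C) + μ (P \ C) = μ P := measure_inter_add_diff P hCmeas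
  have hle : μ (P ∩ C) + μ (P \ C) ≤ μ (P ∩ C) + 0 := by
    rw [add_zero, hsplit]
    exact hPles.trans hslePC
  have := (ENNReal.add_le_add_iff_left (measure_ne_top μ _)).mp hle
  exact le_antisymm this (zero_le)
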